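/- Let (S₁,S₂,I₁,I₂,R₁,R₂,D₁,D₂) be a solution of the two-group active-population SIRD model on [0,∞) with initial data S₁(0) > 0, S₂(0) > 0, Iᵢ(0), Rᵢ(0) ≥ 0, all compartments remaining nonnegative, and suppose Sᵢ(t) > 0 and Nᵢ(t) > 0 for all t ≥ 0. Then for each i = 1,2 the function Fᵢ(t) := Sᵢ(t) / (N₁(t)^{βᵢ₁/μ₁} · N₂(t)^{βᵢ₂/μ₂}) is constant on [0,∞): Fᵢ(t) = Fᵢ(0) = Sᵢ(0) / (N₁(0)^{βᵢ₁/μ₁} · N₂(0)^{βᵢ₂/μ₂}) > 0 for all t ≥ 0 (a first integral of the system). -/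

import Mathlib

open Filter

lemma sird_aux (a b : ℝ) (S N1 N2 : ℝ → ℝ)
    (hS : ∀ t ≥ (0:ℝ), 0 < S t) (h1 : ∀ t ≥ (0:ℝ), 0 < N1 t) (h2 : ∀ t ≥ (0:ℝ), 0 < N2 t)
    (hd : ∀ t ≥ (0:ℝ), ∃ d e1 e2 : ℝ, HasDerivAt S d t ∧ HasDerivAt N1 e1 t ∧
        HasDerivAt N2 e2 t ∧ d / S t = a * (e1 / N1 t) + b * (e2 / N2 t)) :
    ∀ t ≥ (0:ℝ), S t / (N1 t ^ a * N2 t ^ b) = S 0 / (N1 0 ^ a * N2 0 ^ b) := by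
  set g : ℝ → ℝ := fun t => Real.log (S t) - a * Real.log (N1 t) - b * Real.log (N2 t) with hg
  have hgderiv : ∀ t ≥ (0:ℝ), HasDerivAt g 0 t := by
    intro t ht
    obtain ⟨d, e1, e2, hSd, hN1d, hN2d, hrel⟩ := hd t ht
    have h : HasDerivAt g (d / S t - a * (e1 / N1 t) - b * (e2 / N2 t)) t := by
      exact ((hSd.log (hS t ht).ne').sub ((hN1d.log (h1 t ht).ne').const_mul a)).sub
        ((hN2d.log (h2 t ht).ne').const_mul b)
    have : d / S t - a * (e1 / N1 t) - b * (e2 / N2 t) = 0 := by rw [hrel]; ring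
    rwa [this] at h
  have hconst : ∀ t ≥ (0:ℝ), g t = g 0 := by
    intro t ht
    have := constant_of_has_deriv_right_zero (f := g) (a := 0) (b := t)
      (fun x hx => ((hgderiv x hx.1).continuousAt).continuousWithinAt)
      (fun x hx => (hgderiv x hx.1).hasDerivWithinAt)
    exact this t ⟨ht, le_refl t⟩
  have key : ∀ t ≥ (0:ℝ), S t / (N1 t ^ a * N2 t ^ b) = Real.exp (g t) := by
    intro t ht
    rw [hg]
    simp only
    rw [Real.rpow_def_of_pos (h1 t ht), Real.rpow_def_of_pos (h2 t ht),
      sub_sub, Real.exp_sub, Real.exp_log (hS t ht), Real.exp_add, mul_comm (Real.log (N1 t)) a, mul_comm (Real.log (N2 t)) b]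
  intro t ht
  rw [key t ht, key 0 le_rfl, hconst t ht]

theorem stmt_5
    (β11 β12 β21 β22 γ1 γ2 μ1 μ2 : ℝ)
    (hβ11 : 0 < β11) (hβ12 : 0 < β12) (hβ21 : 0 < β21) (hβ22 : 0 < β22)
    (hγ1 : 0 < γ1) (hγ2 : 0 < γ2) (hμ1 : 0 < μ1) (hμ2 : 0 < μ2)
    (S1 S2 I1 I2 R1 R2 D1 D2 N1 N2 : ℝ → ℝ)
    (hN1 : ∀ t, N1 t = S1 t + I1 t + R1 t)
    (hN2 : ∀ t, N2 t = S2 t + I2 t + R2 t)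
    (hS1' : ∀ t ≥ (0:ℝ), HasDerivAt S1 (-(β11 * I1 t / N1 t + β12 * I2 t / N2 t) * S1 t) t)
    (hS2' : ∀ t ≥ (0:ℝ), HasDerivAt S2 (-(β21 * I1 t / N1 t + β22 * I2 t / N2 t) * S2 t) t)
    (hI1' : ∀ t ≥ (0:ℝ), HasDerivAt I1 ((β11 * I1 t / N1 t + β12 * I2 t / N2 t) * S1 t - (γ1 + μ1) * I1 t) t)
    (hI2' : ∀ t ≥ (0:ℝ), HasDerivAt I2 ((β21 * I1 t / N1 t + β22 * I2 t / N2 t) * S2 t - (γ2 + μ2) * I2 t) t)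
    (hR1' : ∀ t ≥ (0:ℝ), HasDerivAt R1 (γ1 * I1 t) t)
    (hR2' : ∀ t ≥ (0:ℝ), HasDerivAt R2 (γ2 * I2 t) t)
    (hD1' : ∀ t ≥ (0:ℝ), HasDerivAt D1 (μ1 * I1 t) t)
    (hD2' : ∀ t ≥ (0:ℝ), HasDerivAt D2 (μ2 * I2 t) t)
    (hS10 : 0 < S1 0) (hS20 : 0 < S2 0)
    (hI10 : 0 ≤ I1 0) (hI20 : 0 ≤ I2 0)
    (hR10 : 0 ≤ R1 0) (hR20 : 0 ≤ R2 0)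
    (hD10 : 0 ≤ D1 0) (hD20 : 0 ≤ D2 0)
    (hnn1 : ∀ t ≥ (0:ℝ), 0 ≤ S1 t ∧ 0 ≤ I1 t ∧ 0 ≤ R1 t ∧ 0 ≤ D1 t)
    (hnn2 : ∀ t ≥ (0:ℝ), 0 ≤ S2 t ∧ 0 ≤ I2 t ∧ 0 ≤ R2 t ∧ 0 ≤ D2 t)
    (hS1pos : ∀ t ≥ (0:ℝ), 0 < S1 t)
    (hS2pos : ∀ t ≥ (0:ℝ), 0 < S2 t)
    (hN1pos : ∀ t ≥ (0:ℝ), 0 < N1 t)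
    (hN2pos : ∀ t ≥ (0:ℝ), 0 < N2 t)
    :
    ∀ t ≥ (0:ℝ),
      (S1 t / ((N1 t) ^ (β11 / μ1) * (N2 t) ^ (β12 / μ2))
          = S1 0 / ((N1 0) ^ (β11 / μ1) * (N2 0) ^ (β12 / μ2)) ∧
        0 < S1 0 / ((N1 0) ^ (β11 / μ1) * (N2 0) ^ (β12 / μ2))) ∧
      (S2 t / ((N1 t) ^ (β21 / μ1) * (N2 t) ^ (β22 / μ2))
          = S2 0 / ((N1 0) ^ (β21 / μ1) * (N2 0) ^ (β22 / μ2)) ∧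
        0 < S2 0 / ((N1 0) ^ (β21 / μ1) * (N2 0) ^ (β22 / μ2))) := by
  have hN1eq : N1 = fun t => S1 t + I1 t + R1 t := funext hN1
  have hN2eq : N2 = fun t => S2 t + I2 t + R2 t := funext hN2
  have hN1' : ∀ t ≥ (0:ℝ), HasDerivAt N1 (-μ1 * I1 t) t := by
    intro t ht
    have h : HasDerivAt (fun t => S1 t + I1 t + R1 t) (-μ1 * I1 t) t := by
      have := ((hS1' t ht).add (hI1' t ht)).add (hR1' t ht)
      exact this.congr_deriv (by ring)
    rw [hN1eq]; exact h
  have hN2' : ∀ t ≥ (0:ℝ), HasDerivAt N2 (-μ2 * I2 t) t := by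
    intro t ht
    have h : HasDerivAt (fun t => S2 t + I2 t + R2 t) (-μ2 * I2 t) t := by
      have := ((hS2' t ht).add (hI2' t ht)).add (hR2' t ht)
      exact this.congr_deriv (by ring)
    rw [hN2eq]; exact h
  have hd1 : ∀ t ≥ (0:ℝ), ∃ d e1 e2 : ℝ, HasDerivAt S1 d t ∧ HasDerivAt N1 e1 t ∧
      HasDerivAt N2 e2 t ∧ d / S1 t = (β11 / μ1) * (e1 / N1 t) + (β12 / μ2) * (e2 / N2 t) := by
    intro t ht
    refine ⟨_, _, _, hS1' t ht, hN1' t ht, hN2' t ht, ?_⟩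
    have hs := (hS1pos t ht).ne'
    have h1 := (hN1pos t ht).ne'
    have h2 := (hN2pos t ht).ne'
    have hm1 := hμ1.ne'
    have hm2 := hμ2.ne'
    field_simp
    ring
  have hd2 : ∀ t ≥ (0:ℝ), ∃ d e1 e2 : ℝ, HasDerivAt S2 d t ∧ HasDerivAt N1 e1 t ∧
      HasDerivAt N2 e2 t ∧ d / S2 t = (β21 / μ1) * (e1 / N1 t) + (β22 / μ2) * (e2 / N2 t) := by
    intro t ht
    refine ⟨_, _, _, hS2' t ht, hN1' t ht, hN2' t ht, ?_⟩
    have hs := (hS2pos t ht).ne'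
    have h1 := (hN1pos t ht).ne'
    have h2 := (hN2pos t ht).ne'
    have hm1 := hμ1.ne'
    have hm2 := hμ2.ne'
    field_simp
    ring
  have key1 := sird_aux (β11 / μ1) (β12 / μ2) S1 N1 N2 hS1pos hN1pos hN2pos hd1
  have key2 := sird_aux (β21 / μ1) (β22 / μ2) S2 N1 N2 hS2pos hN1pos hN2pos hd2
  intro t ht
  have p1 := hN1pos 0 le_rfl
  have p2 := hN2pos 0 le_rfl
  exact ⟨⟨key1 t ht, div_pos hS10 (mul_pos (Real.rpow_pos_of_pos p1 _) (Real.rpow_pos_of_pos p2 _))⟩,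
    ⟨key2 t ht, div_pos hS20 (mul_pos (Real.rpow_pos_of_pos p1 _) (Real.rpow_pos_of_pos p2 _))⟩⟩
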